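/- Fix a state type S and define the Imp monad and the partial-correctness interpretation θPart : Imp A → WSt A as follows: Imp A has constructors Ret : A → Imp A, Get : (S → Imp A) → Imp A, Put : S → Imp A → Imp A, DoWhile : Imp Bool → Imp A → Imp A; WSt A is the complete lattice of monotone predicate transformers (A → S → Prop) → S → Prop; θPart interprets Ret, Get, Put in the standard stateful way and interprets DoWhile via the greatest fixed point (w.r.t. pointwise implication) of the loop functional w ↦ bindW (θPart body) (fun b => if b then w else retW false). Let do_while body := DoWhile body (Ret ()). Embed θPart into the two-state specification monad Wrel over S × S (acting on the left state for θ1 and on the right state for θ2) and define θPartRel (c1, c2) := bindW (θ1 c1) (fun a1 => bindW (θ2 c2) (fun a2 => retW (a1, a2))). Then the synchronous do-while rule is sound: for any invariant inv : Bool → Bool → S × S → Prop, if θPartRel (body1, body2) refines the specification with precondition inv true true and postcondition asserting, of initial states (s1, s2), results (b1, b2) and final states (s1', s2'), that b1 = b2 and inv b1 b2 (s1', s2'), then θPartRel (do_while body1, do_while body2) refines the specification with precondition inv true true and postcondition that the final states (s1', s2') satisfy inv false false (s1', s2'). -/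
import Mathlib


/-- The `Imp` monad: syntax of imperative programs with state `S` and
unbounded iteration. -/
inductive Imp (S : Type) : Type → Type 1 where
  | Ret : {A : Type} → A → Imp S A
  | Get : {A : Type} → (S → Imp S A) → Imp S A
  | Put : {A : Type} → S → Imp S A → Imp S A
  | DoWhile : {A : Type} → Imp S Bool → Imp S A → Imp S A

/-- Stateful backward predicate transformers, ordered by pointwise implication
(a complete lattice). -/
def WSt (S A : Type) : Type := (A → S → Prop) → S → Prop

def retW {S A : Type} (a : A) : WSt S A := fun φ s => φ a s

def bindW {S A B : Type} (w : WSt S A) (g : A → WSt S B) : WSt S B :=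
  fun φ s => w (fun a s' => g a φ s') s

noncomputable instance instCompleteLatticeWSt (S A : Type) :
    CompleteLattice (WSt S A) := by
  unfold WSt; infer_instance

/-- The greatest fixed point (with respect to pointwise implication) of a map on
`WSt S Bool`, via the Knaster–Tarski formula. -/
def wfix {S : Type} (F : WSt S Bool → WSt S Bool) : WSt S Bool :=
  sSup {w | w ≤ F w}

/-- The partial-correctness interpretation of `Imp` over the pair-state `S × S`,
acting on the left component of the state. -/
def θPart1 {S : Type} : {A : Type} → Imp S A → WSt (S × S) A
  | _, .Ret a => retW a
  | _, .Get k => fun φ s => θPart1 (k s.1) φ s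
  | _, .Put s' k => fun φ s => θPart1 k φ (s', s.2)
  | _, .DoWhile body k =>
      bindW (wfix (fun w => bindW (θPart1 body) (fun b => if b then w else retW false)))
        (fun _ => θPart1 k)

/-- The partial-correctness interpretation of `Imp` over the pair-state `S × S`,
acting on the right component of the state. -/
def θPart2 {S : Type} : {A : Type} → Imp S A → WSt (S × S) A
  | _, .Ret a => retW a
  | _, .Get k => fun φ s => θPart2 (k s.2) φ s
  | _, .Put s' k => fun φ s => θPart2 k φ (s.1, s')
  | _, .DoWhile body k =>
      bindW (wfix (fun w => bindW (θPart2 body) (fun b => if b then w else retW false)))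
        (fun _ => θPart2 k)

/-- The relational partial-correctness effect observation for `Imp`. -/
def θPartRel {S A1 A2 : Type} (c1 : Imp S A1) (c2 : Imp S A2) :
    WSt (S × S) (A1 × A2) :=
  bindW (θPart1 c1) (fun a1 => bindW (θPart2 c2) (fun a2 => retW (a1, a2)))

/-- `do_while body` iterates `body` as long as it returns `true`. -/
def doWhile {S : Type} (body : Imp S Bool) : Imp S Unit :=
  Imp.DoWhile body (Imp.Ret ())

/- ============ auxiliary development ============ -/

/-- Unary predicate-transformer type. -/
def Wu (S A : Type) : Type := (A → S → Prop) → S → Prop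

/-- Existential (Knaster–Tarski style) greatest fixed point for unary loop
functionals. -/
def ufix {S : Type} (F : Wu S Bool → Wu S Bool) : Wu S Bool :=
  fun χ s => ∃ w : Wu S Bool, (∀ χ' s', w χ' s' → F w χ' s') ∧ w χ s

/-- Unary partial-correctness semantics of `Imp` over a single state. -/
def θu {S : Type} : {A : Type} → Imp S A → Wu S A
  | _, .Ret a => fun φ s => φ a s
  | _, .Get k => fun φ s => θu (k s) φ s
  | _, .Put s' k => fun φ _ => θu k φ s'
  | _, .DoWhile body k =>
      fun φ s =>
        ufix (fun w χ t => θu body (fun b t' => if b then w χ t' else χ false t') t)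
          (fun _ t => θu k φ t) s

lemma wfix_iff {S : Type} (F : WSt S Bool → WSt S Bool) (χ : Bool → S → Prop) (s : S) :
    wfix F χ s ↔ ∃ w : WSt S Bool, (∀ χ' s', w χ' s' → F w χ' s') ∧ w χ s := by
  constructor
  · intro h
    exact sSup_le (α := WSt S Bool) (s := {w | w ≤ F w})
      (a := fun χ' s' => ∃ w : WSt S Bool, (∀ χ'' s'', w χ'' s'' → F w χ'' s'') ∧ w χ' s')
      (fun w hw => fun χ' s' h' => ⟨w, fun χ'' s'' h'' => hw χ'' s'' h'', h'⟩) χ s h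
  · rintro ⟨w, hpf, hw⟩
    exact le_sSup (α := WSt S Bool) (s := {w | w ≤ F w})
      (show w ≤ F w from fun χ' s' h => hpf χ' s' h) χ s hw

theorem theta_mono {S : Type} : ∀ {A : Type} (c : Imp S A) (φ φ' : A → S → Prop),
    (∀ a s, φ a s → φ' a s) → ∀ s, θu c φ s → θu c φ' s := by
  intro A c
  induction c with
  | Ret a => intro φ φ' h s hs; exact h a s hs
  | Get k ih => intro φ φ' h s hs; exact ih s φ φ' h s hs
  | Put s' k ih => intro φ φ' h s hs; exact ih φ φ' h s' hs
  | DoWhile body k ihb ihk =>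
    intro φ φ' h s hs
    simp only [θu, ufix] at hs ⊢
    obtain ⟨w, hpf, hw⟩ := hs
    refine ⟨fun χ t => ∃ χ0, (∀ b u, χ0 b u → χ b u) ∧ w χ0 t, ?_, ?_⟩
    · rintro χ t ⟨χ0, hle, hw0⟩
      have h1 := hpf χ0 t hw0
      refine ihb _ _ ?_ t h1
      intro b u hb
      cases b with
      | false => exact hle false u hb
      | true => exact ⟨χ0, hle, hb⟩
    · exact ⟨fun _ t => θu k φ t, fun b u hu => ihk φ φ' h u hu, hw⟩

theorem theta_conj {S : Type} : ∀ {A : Type} (c : Imp S A) {ι : Type} (φ : ι → A → S → Prop)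
    (s : S), (∀ i, θu c (φ i) s) → θu c (fun a t => ∀ i, φ i a t) s := by
  intro A c
  induction c with
  | Ret a => intro ι φ s h; exact h
  | Get k ih => intro ι φ s h; exact ih s φ s h
  | Put s' k ih => intro ι φ s h; exact ih φ s' h
  | DoWhile body k ihb ihk =>
    intro ι φ s h
    simp only [θu, ufix] at h ⊢
    choose w hpf hw using h
    have key : (fun (_ : Bool) (u : S) => ∀ i, θu k (φ i) u)
        = (fun (_ : Bool) (u : S) => θu k (fun a t => ∀ i, φ i a t) u) := by
      funext b u
      exact propext ⟨fun hh => ihk φ u hh,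
        fun hh i => theta_mono k _ _ (fun a t ht => ht i) u hh⟩
    refine ⟨fun χ t => ∃ χf : ι → (Bool → S → Prop),
        ((fun b u => ∀ i, χf i b u) = χ) ∧ ∀ i, w i (χf i) t, ?_, ?_⟩
    · rintro χ t ⟨χf, rfl, hall⟩
      have h1 : ∀ i, θu body (fun b t' => if b then w i (χf i) t' else χf i false t') t :=
        fun i => hpf i _ t (hall i)
      have h2 := ihb (fun i b t' => if b then w i (χf i) t' else χf i false t') t h1
      refine theta_mono body _ _ ?_ t h2
      intro b u hb
      cases b with
      | false => exact hb
      | true => exact ⟨χf, rfl, fun i => hb i⟩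
    · refine ⟨fun i => fun _ t => θu k (φ i) t, key, fun i => hw i⟩

theorem corr1 {S : Type} : ∀ {A : Type} (c : Imp S A) (φ : A → S × S → Prop) (l r : S),
    θPart1 c φ (l, r) ↔ θu c (fun a l' => φ a (l', r)) l := by
  intro A c
  induction c with
  | Ret a => intro φ l r; exact Iff.rfl
  | Get k ih => intro φ l r; exact ih l φ l r
  | Put s' k ih => intro φ l r; exact ih φ s' r
  | DoWhile body k ihb ihk =>
    intro φ l r
    show wfix _ (fun _ v => θPart1 k φ v) (l, r) ↔
      ufix _ (fun _ u => θu k (fun a l' => φ a (l', r)) u) l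
    rw [wfix_iff]
    constructor
    · rintro ⟨w, hpf, hw⟩
      refine ⟨fun χ t => ∃ χp, χ = (fun b u => χp b (u, r)) ∧ w χp (t, r), ?_, ?_⟩
      · rintro χ t ⟨χp, rfl, hwp⟩
        have h1 := hpf χp (t, r) hwp
        have h1' : θPart1 body (fun b v => if b then w χp v else χp false v) (t, r) := by
          refine Eq.mp ?_ h1
          show bindW (θPart1 body) _ χp (t, r) = _
          simp only [bindW]
          congr 1
          funext b v
          cases b <;> rfl
        have h2 := (ihb _ t r).mp h1'
        refine theta_mono body _ _ ?_ t h2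
        intro b u hb
        cases b with
        | false => exact hb
        | true => exact ⟨χp, rfl, hb⟩
      · refine ⟨fun b v => θPart1 k φ v, ?_, hw⟩
        funext b u
        exact propext (ihk φ u r).symm
    · rintro ⟨w, hpf, hw⟩
      refine ⟨fun χp v => w (fun b u => χp b (u, v.2)) v.1, ?_, ?_⟩
      · rintro χp ⟨t, r₂⟩ hwp
        have h1 := hpf (fun b u => χp b (u, r₂)) t hwp
        have h2 := (ihb (fun b v => if b then w (fun b' u' => χp b' (u', v.2)) v.1
            else χp false v) t r₂).mpr h1
        show bindW (θPart1 body) _ χp (t, r₂)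
        simp only [bindW]
        refine Eq.mp ?_ h2
        congr 1
        funext b v
        cases b <;> rfl
      · refine Eq.mp ?_ hw
        congr 1
        funext b u
        exact propext (ihk φ u r).symm

theorem corr2 {S : Type} : ∀ {A : Type} (c : Imp S A) (φ : A → S × S → Prop) (l r : S),
    θPart2 c φ (l, r) ↔ θu c (fun a r' => φ a (l, r')) r := by
  intro A c
  induction c with
  | Ret a => intro φ l r; exact Iff.rfl
  | Get k ih => intro φ l r; exact ih r φ l r
  | Put s' k ih => intro φ l r; exact ih φ l s'
  | DoWhile body k ihb ihk =>
    intro φ l r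
    show wfix _ (fun _ v => θPart2 k φ v) (l, r) ↔
      ufix _ (fun _ u => θu k (fun a r' => φ a (l, r')) u) r
    rw [wfix_iff]
    constructor
    · rintro ⟨w, hpf, hw⟩
      refine ⟨fun χ t => ∃ χp, χ = (fun b u => χp b (l, u)) ∧ w χp (l, t), ?_, ?_⟩
      · rintro χ t ⟨χp, rfl, hwp⟩
        have h1 := hpf χp (l, t) hwp
        have h1' : θPart2 body (fun b v => if b then w χp v else χp false v) (l, t) := by
          refine Eq.mp ?_ h1
          show bindW (θPart2 body) _ χp (l, t) = _
          simp only [bindW]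
          congr 1
          funext b v
          cases b <;> rfl
        have h2 := (ihb _ l t).mp h1'
        refine theta_mono body _ _ ?_ t h2
        intro b u hb
        cases b with
        | false => exact hb
        | true => exact ⟨χp, rfl, hb⟩
      · refine ⟨fun b v => θPart2 k φ v, ?_, hw⟩
        funext b u
        exact propext (ihk φ l u).symm
    · rintro ⟨w, hpf, hw⟩
      refine ⟨fun χp v => w (fun b u => χp b (v.1, u)) v.2, ?_, ?_⟩
      · rintro χp ⟨l₂, t⟩ hwp
        have h1 := hpf (fun b u => χp b (l₂, u)) t hwp
        have h2 := (ihb (fun b v => if b then w (fun b' u' => χp b' (v.1, u')) v.2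
            else χp false v) l₂ t).mpr h1
        show bindW (θPart2 body) _ χp (l₂, t)
        simp only [bindW]
        refine Eq.mp ?_ h2
        congr 1
        funext b v
        cases b <;> rfl
      · refine Eq.mp ?_ hw
        congr 1
        funext b u
        exact propext (ihk φ l u).symm


/-- soundness of the synchronous do-while rule for the
relational partial-correctness effect observation, with invariant `inv`. -/
theorem doWhile_rule_sound {S : Type}
    (body1 body2 : Imp S Bool) (inv : Bool → Bool → S × S → Prop)
    (hbody : ∀ (φ : Bool × Bool → S × S → Prop) (s1 s2 : S),
      (inv true true (s1, s2) ∧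
        ∀ (b1 b2 : Bool) (s1' s2' : S),
          (b1 = b2 ∧ inv b1 b2 (s1', s2')) → φ (b1, b2) (s1', s2')) →
      θPartRel body1 body2 φ (s1, s2)) :
    ∀ (φ : Unit × Unit → S × S → Prop) (s1 s2 : S),
      (inv true true (s1, s2) ∧
        ∀ (a1 a2 : Unit) (s1' s2' : S),
          inv false false (s1', s2') → φ (a1, a2) (s1', s2')) →
      θPartRel (doWhile body1) (doWhile body2) φ (s1, s2) := by
  rintro φ s1 s2 ⟨hinv, hpost⟩
  -- step fact, in unary form
  have hstep : ∀ l r, inv true true (l, r) →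
      θu body1 (fun b1 l' => θu body2 (fun b2 r' => b1 = b2 ∧ inv b1 b2 (l', r')) r) l := by
    intro l r hlr
    have h0 := hbody (fun p q => p.1 = p.2 ∧ inv p.1 p.2 q) l r
      ⟨hlr, fun b1 b2 s1' s2' h => h⟩
    have h1 := (corr1 body1
      (fun b1 u => θPart2 body2 (fun b2 v => b1 = b2 ∧ inv b1 b2 v) u) l r).mp h0
    refine theta_mono body1 _ _ ?_ l h1
    intro b1 l' h2
    exact (corr2 body2 (fun b2 v => b1 = b2 ∧ inv b1 b2 v) l' r).mp h2
  show θPart1 (doWhile body1)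
    (fun a1 u => θPart2 (doWhile body2) (fun a2 v => φ (a1, a2) v) u) (s1, s2)
  refine (corr1 (doWhile body1) _ s1 s2).mpr ?_
  have hin : (fun (a1 : Unit) (l' : S) =>
        θPart2 (doWhile body2) (fun a2 v => φ (a1, a2) v) (l', s2))
      = (fun (a1 : Unit) (l' : S) =>
        θu (doWhile body2) (fun a2 r' => φ (a1, a2) (l', r')) s2) := by
    funext a1 l'
    exact propext (corr2 (doWhile body2) (fun a2 v => φ (a1, a2) v) l' s2)
  rw [hin]
  -- now a purely unary goal about the two loops
  show ufix (fun w χ t => θu body1 (fun b t' => if b then w χ t' else χ false t') t)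
    (fun _ l' => ufix (fun w χ t => θu body2 (fun b t' => if b then w χ t' else χ false t') t)
      (fun _ r' => φ ((), ()) (l', r')) s2) s1
  set Ψ : Bool → S → Prop := fun _ l' =>
    ufix (fun w χ t => θu body2 (fun b t' => if b then w χ t' else χ false t') t)
      (fun _ r' => φ ((), ()) (l', r')) s2 with hΨ
  set P : S → Prop := fun l => ∃ (k : ℕ) (T : ℕ → S → Prop), T 0 s2 ∧
    (∀ i, i < k → ∀ r, T i r → θu body2 (fun b2 r' => b2 = true ∧ T (i+1) r') r) ∧
    (∀ r, T k r → inv true true (l, r)) with hP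
  refine ⟨fun χ l => χ = Ψ ∧ P l, ?_, rfl, ?_⟩
  · rintro χ l ⟨rfl, k, T, hT0, hch, hfr⟩
    have hall : ∀ rr : {r // T k r},
        θu body1 (fun b1 l' => θu body2 (fun b2 r' => b1 = b2 ∧ inv b1 b2 (l', r')) rr.1) l :=
      fun rr => hstep l rr.1 (hfr rr.1 rr.2)
    have hc := theta_conj body1
      (fun (rr : {r // T k r}) b1 l' =>
        θu body2 (fun b2 r' => b1 = b2 ∧ inv b1 b2 (l', r')) rr.1) l hall
    refine theta_mono body1 _ _ ?_ l hc
    intro b l' hb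
    cases b with
    | true =>
      show Ψ = Ψ ∧ P l'
      refine ⟨rfl, k+1, fun i r => (i ≤ k ∧ T i r) ∨ (i = k+1 ∧ inv true true (l', r)),
        Or.inl ⟨Nat.zero_le k, hT0⟩, ?_, ?_⟩
      · intro i hik r hT
        rcases hT with ⟨hik2, hTi⟩ | ⟨hik2, _⟩
        · rcases Nat.lt_or_ge i k with hlt | hge
          · have := hch i hlt r hTi
            refine theta_mono body2 _ _ ?_ r this
            rintro b r' ⟨hb2, hT'⟩
            exact ⟨hb2, Or.inl ⟨Nat.succ_le_of_lt hlt, hT'⟩⟩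
          · have hik3 : i = k := le_antisymm hik2 hge
            subst hik3
            have := hb ⟨r, hTi⟩
            refine theta_mono body2 _ _ ?_ r this
            rintro b r' ⟨hb2, hinv'⟩
            cases hb2
            exact ⟨rfl, Or.inr ⟨rfl, hinv'⟩⟩
        · omega
      · intro r hT
        rcases hT with ⟨hik, _⟩ | ⟨_, h⟩
        · omega
        · exact h
    | false =>
      show Ψ false l'
      refine ⟨fun χ₂ r₂ => χ₂ = (fun _ r' => φ ((), ()) (l', r')) ∧ ∃ i, i ≤ k ∧ T i r₂,
        ?_, rfl, 0, Nat.zero_le k, hT0⟩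
      rintro χ₂ r₂ ⟨rfl, i, hik, hTi⟩
      rcases Nat.lt_or_ge i k with hlt | hge
      · have := hch i hlt r₂ hTi
        refine theta_mono body2 _ _ ?_ r₂ this
        rintro b r' ⟨hb2, hT'⟩
        subst hb2
        exact ⟨rfl, i+1, Nat.succ_le_of_lt hlt, hT'⟩
      · have hik' : i = k := le_antisymm hik hge
        subst hik'
        have := hb ⟨r₂, hTi⟩
        refine theta_mono body2 _ _ ?_ r₂ this
        rintro b r' ⟨hb2, hinv'⟩
        cases hb2
        exact hpost () () l' r' hinv'
  · exact ⟨0, fun i r => i = 0 ∧ r = s2, ⟨rfl, rfl⟩, fun i hi => by omega,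
      fun r ⟨_, hr⟩ => hr ▸ hinv⟩
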